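/- Let H be a complex Hilbert space, Ψ ∈ H a unit vector, and A a finite nonempty set. For i = 1, 2, 3 let {X_i^a}_{a∈A} and {Y_i^a}_{a∈A} be families of positive bounded operators on H with Σ_a (X_i^a)² = I and Σ_a (Y_i^a)² = I, and suppose that every X_i^a commutes with every Y_j^{a'} (for all i, j ∈ {1,2,3} and a, a' ∈ A). Then (1/2) Σ_{a_1,a_2,a_3∈A} | ‖X_1^{a_1} X_2^{a_2} X_3^{a_3} Ψ‖² − ‖Y_3^{a_3} Y_2^{a_2} Y_1^{a_1} Ψ‖² | ≤ Σ_{i=1}^3 D( (X_i^a Ψ)_{a}, (Y_i^a Ψ)_{a} ). -/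

import Mathlib

open scoped ComplexInnerProductSpace

/-- `D(u, v) = √(1 − |⟨u, v⟩|²)` for families `(u_a)`, `(v_a)` of vectors, viewed as vectors of
the Hilbert space direct sum `⊕_{a} H` (whose inner product is `Σ_a ⟪u_a, v_a⟫`). -/
noncomputable def tdistFam {H : Type*} [NormedAddCommGroup H] [InnerProductSpace ℂ H]
    {S : Type*} [Fintype S] (u v : S → H) : ℝ :=
  Real.sqrt (1 - ‖∑ s, ⟪u s, v s⟫‖ ^ 2)

section Aux

variable {E : Type*} [NormedAddCommGroup E] [InnerProductSpace ℂ E]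

/-- Key geometric inequality: `|⟨u,w⟩| ≥ |⟨u,v⟩||⟨v,w⟩| − √(1−|⟨u,v⟩|²)√(1−|⟨v,w⟩|²)`. -/
lemma lemA (u v w : E) (hu : ‖u‖ = 1) (hv : ‖v‖ = 1) (hw : ‖w‖ = 1) :
    ‖⟪u,v⟫‖ * ‖⟪v,w⟫‖ - Real.sqrt (1 - ‖⟪u,v⟫‖^2) * Real.sqrt (1 - ‖⟪v,w⟫‖^2) ≤ ‖⟪u,w⟫‖ := by
  set u' : E := u - ⟪v,u⟫ • v with hu'
  set w' : E := w - ⟪v,w⟫ • v with hw'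
  have hvv : ⟪v,v⟫ = 1 := by
    rw [inner_self_eq_norm_sq_to_K, hv]; norm_num
  have h1 : ⟪u,w⟫ = ⟪u',w'⟫ + (starRingEnd ℂ) ⟪v,u⟫ * ⟪v,w⟫ := by
    simp only [hu', hw', inner_sub_left, inner_sub_right, inner_smul_left, inner_smul_right, hvv,
      mul_one, inner_conj_symm]
    ring
  have eu : ⟪u',u'⟫ = ⟪u,u⟫ - (starRingEnd ℂ) ⟪v,u⟫ * ⟪v,u⟫ := by
    simp only [hu', inner_sub_left, inner_sub_right, inner_smul_left, inner_smul_right, hvv,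
      mul_one, inner_conj_symm]
    ring
  have ew : ⟪w',w'⟫ = ⟪w,w⟫ - (starRingEnd ℂ) ⟪v,w⟫ * ⟪v,w⟫ := by
    simp only [hw', inner_sub_left, inner_sub_right, inner_smul_left, inner_smul_right, hvv,
      mul_one, inner_conj_symm]
    ring
  have hnu : ‖u'‖ ^ 2 = 1 - ‖⟪u,v⟫‖^2 := by
    have h := inner_self_eq_norm_sq (𝕜 := ℂ) u'
    rw [eu, RCLike.conj_mul, inner_self_eq_norm_sq_to_K, hu, ← norm_inner_symm u v] at h
    rw [← h]
    simp [← Complex.ofReal_pow]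
  have hnw : ‖w'‖ ^ 2 = 1 - ‖⟪v,w⟫‖^2 := by
    have h := inner_self_eq_norm_sq (𝕜 := ℂ) w'
    rw [ew, RCLike.conj_mul, inner_self_eq_norm_sq_to_K, hw] at h
    rw [← h]
    simp [← Complex.ofReal_pow]
  have hsu : Real.sqrt (1 - ‖⟪u,v⟫‖^2) = ‖u'‖ := by
    rw [← hnu, Real.sqrt_sq (norm_nonneg _)]
  have hsw : Real.sqrt (1 - ‖⟪v,w⟫‖^2) = ‖w'‖ := by
    rw [← hnw, Real.sqrt_sq (norm_nonneg _)]
  have h2 : ‖⟪u,v⟫‖ * ‖⟪v,w⟫‖ ≤ ‖⟪u,w⟫‖ + ‖u'‖ * ‖w'‖ := by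
    have heq : (starRingEnd ℂ) ⟪v,u⟫ * ⟪v,w⟫ = ⟪u,w⟫ - ⟪u',w'⟫ := by rw [h1]; ring
    calc ‖⟪u,v⟫‖ * ‖⟪v,w⟫‖ = ‖(starRingEnd ℂ) ⟪v,u⟫ * ⟪v,w⟫‖ := by
          rw [norm_mul, RCLike.norm_conj, norm_inner_symm u v]
      _ = ‖⟪u,w⟫ - ⟪u',w'⟫‖ := by rw [heq]
      _ ≤ ‖⟪u,w⟫‖ + ‖⟪u',w'⟫‖ := norm_sub_le _ _
      _ ≤ ‖⟪u,w⟫‖ + ‖u'‖ * ‖w'‖ := by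
          have := norm_inner_le_norm (𝕜 := ℂ) u' w'
          linarith
  rw [hsu, hsw]; linarith

set_option maxHeartbeats 1000000 in
/-- Purely real-arithmetic form of the sine triangle inequality. -/
lemma sineTri (a b c : ℝ) (ha0 : 0 ≤ a) (ha1 : a ≤ 1) (hb0 : 0 ≤ b) (hb1 : b ≤ 1)
    (hc0 : 0 ≤ c)
    (hA : a * b - Real.sqrt (1 - a^2) * Real.sqrt (1 - b^2) ≤ c) :
    Real.sqrt (1 - c^2) ≤ Real.sqrt (1 - a^2) + Real.sqrt (1 - b^2) := by
  set sa := Real.sqrt (1 - a^2) with hsa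
  set sb := Real.sqrt (1 - b^2) with hsb
  have hsa2 : sa^2 = 1 - a^2 := Real.sq_sqrt (by nlinarith)
  have hsb2 : sb^2 = 1 - b^2 := Real.sq_sqrt (by nlinarith)
  have hsa0 : 0 ≤ sa := Real.sqrt_nonneg _
  have hsb0 : 0 ≤ sb := Real.sqrt_nonneg _
  have key : 1 - c^2 ≤ (sa + sb)^2 := by
    rcases le_or_gt (a * b) (sa * sb) with h | h
    · nlinarith [sq_nonneg (a - b), sq_nonneg c]
    · have h1 : (a*b - sa*sb)^2 + (sa*b + a*sb)^2 = 1 := by nlinarith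
      have h2 : (a*b - sa*sb)^2 ≤ c^2 := by nlinarith
      have h4 : sa*b + a*sb ≤ sa + sb := by
        nlinarith [mul_le_of_le_one_right hsa0 hb1, mul_le_of_le_one_left hsb0 ha1]
      have h5 : (0:ℝ) ≤ sa*b + a*sb := by positivity
      nlinarith
  calc Real.sqrt (1 - c^2) ≤ Real.sqrt ((sa + sb)^2) := Real.sqrt_le_sqrt key
    _ = sa + sb := Real.sqrt_sq (by positivity)

/-- Triangle inequality for the sine (trace) distance on unit vectors. -/
lemma lemB (u v w : E) (hu : ‖u‖ = 1) (hv : ‖v‖ = 1) (hw : ‖w‖ = 1) :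
    Real.sqrt (1 - ‖⟪u,w⟫‖^2) ≤ Real.sqrt (1 - ‖⟪u,v⟫‖^2) + Real.sqrt (1 - ‖⟪v,w⟫‖^2) := by
  refine sineTri _ _ _ (norm_nonneg _) ?_ (norm_nonneg _) ?_ (norm_nonneg _)
    (lemA u v w hu hv hw)
  · have := norm_inner_le_norm (𝕜 := ℂ) u v; rw [hu, hv] at this; simpa using this
  · have := norm_inner_le_norm (𝕜 := ℂ) v w; rw [hv, hw] at this; simpa using this

variable {H : Type*} [NormedAddCommGroup H] [InnerProductSpace ℂ H]
variable {S : Type*} [Fintype S]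

lemma norm_one_of_sum {u : S → H} (hu : ∑ s, ‖u s‖^2 = 1) :
    ‖(show PiLp 2 (fun _ : S => H) from WithLp.toLp 2 u)‖ = 1 := by
  set U : PiLp 2 (fun _ : S => H) := WithLp.toLp 2 u with hU
  have h := inner_self_eq_norm_sq (𝕜 := ℂ) U
  rw [PiLp.inner_apply, map_sum] at h
  simp only [inner_self_eq_norm_sq] at h
  have hu' : ∑ s, ‖U s‖^2 = 1 := hu
  rw [hu'] at h
  have := Real.sqrt_sq (norm_nonneg U)
  rw [← h] at this
  simpa using this.symm

lemma tdistFam_eq (u v : S → H) :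
    tdistFam u v = Real.sqrt (1 - ‖⟪(show PiLp 2 (fun _ : S => H) from WithLp.toLp 2 u),
      (show PiLp 2 (fun _ : S => H) from WithLp.toLp 2 v)⟫‖^2) := by
  rw [tdistFam, PiLp.inner_apply]

/-- Triangle inequality for `tdistFam`. -/
lemma lemBFam (u v w : S → H) (hu : ∑ s, ‖u s‖^2 = 1) (hv : ∑ s, ‖v s‖^2 = 1)
    (hw : ∑ s, ‖w s‖^2 = 1) :
    tdistFam u w ≤ tdistFam u v + tdistFam v w := by
  rw [tdistFam_eq u w, tdistFam_eq u v, tdistFam_eq v w]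
  exact lemB _ _ _ (norm_one_of_sum hu) (norm_one_of_sum hv) (norm_one_of_sum hw)

/-- Total variation distance is bounded by the sine (trace) distance. -/
lemma lemTV (u v : S → H) (hu : ∑ s, ‖u s‖^2 = 1) (hv : ∑ s, ‖v s‖^2 = 1) :
    (1/2) * ∑ s, |‖u s‖^2 - ‖v s‖^2| ≤ tdistFam u v := by
  set F : ℝ := ∑ s, ‖u s‖ * ‖v s‖ with hF
  have hF0 : 0 ≤ F := Finset.sum_nonneg fun s _ => by positivity
  have hF1 : F ≤ 1 := by
    have := Finset.sum_mul_sq_le_sq_mul_sq Finset.univ (fun s => ‖u s‖) (fun s => ‖v s‖)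
    rw [hu, hv] at this
    nlinarith
  have hIF : ‖∑ s, ⟪u s, v s⟫‖ ≤ F := by
    calc ‖∑ s, ⟪u s, v s⟫‖ ≤ ∑ s, ‖⟪u s, v s⟫‖ := norm_sum_le _ _
      _ ≤ F := Finset.sum_le_sum fun s _ => norm_inner_le_norm _ _
  have hminus : ∑ s, (‖u s‖ - ‖v s‖)^2 = 2 - 2*F := by
    have : ∀ s : S, (‖u s‖ - ‖v s‖)^2 = ‖u s‖^2 + ‖v s‖^2 - 2*(‖u s‖*‖v s‖) := fun s => by ring
    rw [Finset.sum_congr rfl fun s _ => this s]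
    rw [Finset.sum_sub_distrib, Finset.sum_add_distrib, hu, hv, ← Finset.mul_sum, ← hF]
    ring
  have hplus : ∑ s, (‖u s‖ + ‖v s‖)^2 = 2 + 2*F := by
    have : ∀ s : S, (‖u s‖ + ‖v s‖)^2 = ‖u s‖^2 + ‖v s‖^2 + 2*(‖u s‖*‖v s‖) := fun s => by ring
    rw [Finset.sum_congr rfl fun s _ => this s]
    rw [Finset.sum_add_distrib, Finset.sum_add_distrib, hu, hv, ← Finset.mul_sum, ← hF]
    ring
  have hCS : (∑ s, |‖u s‖^2 - ‖v s‖^2|)^2 ≤ (2 - 2*F) * (2 + 2*F) := by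
    have heq : ∀ s : S, |‖u s‖^2 - ‖v s‖^2| = |‖u s‖ - ‖v s‖| * (‖u s‖ + ‖v s‖) := fun s => by
      rw [← abs_of_nonneg (show (0:ℝ) ≤ ‖u s‖ + ‖v s‖ by positivity), ← abs_mul]
      congr 1; ring
    rw [Finset.sum_congr rfl fun s _ => heq s, ← hminus, ← hplus]
    have := Finset.sum_mul_sq_le_sq_mul_sq Finset.univ (fun s => |‖u s‖ - ‖v s‖|)
      (fun s => ‖u s‖ + ‖v s‖)
    simpa [sq_abs] using this
  have hsum0 : 0 ≤ ∑ s, |‖u s‖^2 - ‖v s‖^2| := Finset.sum_nonneg fun s _ => abs_nonneg _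
  have key : ((1/2) * ∑ s, |‖u s‖^2 - ‖v s‖^2|)^2 ≤ 1 - ‖∑ s, ⟪u s, v s⟫‖^2 := by
    have h1 : ((1/2) * ∑ s, |‖u s‖^2 - ‖v s‖^2|)^2 ≤ 1 - F^2 := by nlinarith
    have h2 : ‖∑ s, ⟪u s, v s⟫‖^2 ≤ F^2 := by
      have := norm_nonneg (∑ s, ⟪u s, v s⟫); nlinarith
    linarith
  have hy : (0:ℝ) ≤ 1 - ‖∑ s, ⟪u s, v s⟫‖^2 := by nlinarith
  rw [tdistFam]
  exact (Real.le_sqrt (by positivity) hy).mpr key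

end Aux

section Ops

variable {H : Type*} [NormedAddCommGroup H] [InnerProductSpace ℂ H] [CompleteSpace H]
variable {A : Type*} [Fintype A]

lemma sa_move (T : H →L[ℂ] H) (h : IsSelfAdjoint T) (x y : H) : ⟪T x, y⟫ = ⟪x, T y⟫ := by
  rw [← h.adjoint_eq, ContinuousLinearMap.adjoint_inner_left, h.adjoint_eq]

lemma sum_inner_red (T : A → (H →L[ℂ] H)) (hsa : ∀ a, IsSelfAdjoint (T a))
    (hT : ∑ a, T a ^ 2 = 1) (x y : H) : ∑ a, ⟪T a x, T a y⟫ = ⟪x, y⟫ := by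
  have step : ∀ a : A, ⟪T a x, T a y⟫ = ⟪x, (T a ^ 2) y⟫ := fun a => by
    rw [sa_move (T a) (hsa a), pow_two, ContinuousLinearMap.mul_apply]
  rw [Finset.sum_congr rfl fun a _ => step a, ← inner_sum]
  have : ∑ a : A, (T a ^ 2) y = (∑ a : A, T a ^ 2) y := by
    rw [ContinuousLinearMap.sum_apply]
  rw [this, hT, ContinuousLinearMap.one_apply]

lemma sum_norm_red (T : A → (H →L[ℂ] H)) (hsa : ∀ a, IsSelfAdjoint (T a))
    (hT : ∑ a, T a ^ 2 = 1) (x : H) : ∑ a, ‖T a x‖ ^ 2 = ‖x‖ ^ 2 := by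
  have h := sum_inner_red T hsa hT x x
  simp only [inner_self_eq_norm_sq_to_K] at h
  exact_mod_cast h

lemma sum_rot {M : Type*} [AddCommMonoid M] (f : A → A → A → M) :
    ∑ a₁ : A, ∑ a₂ : A, ∑ a₃ : A, f a₁ a₂ a₃ = ∑ a₂ : A, ∑ a₃ : A, ∑ a₁ : A, f a₁ a₂ a₃ := by
  rw [Finset.sum_comm]
  exact Finset.sum_congr rfl fun a₂ _ => Finset.sum_comm

lemma sum_prod3 {M : Type*} [AddCommMonoid M] (f : A × A × A → M) :
    ∑ a : A × A × A, f a = ∑ a₁ : A, ∑ a₂ : A, ∑ a₃ : A, f (a₁, a₂, a₃) := by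
  rw [Fintype.sum_prod_type]
  exact Finset.sum_congr rfl fun a₁ _ => Fintype.sum_prod_type _

end Ops

/-- For commuting measurement square-root families `X_i`, `Y_i` (`i = 1,2,3`)
applied to a unit vector `Ψ`, the outcome distributions of `X_1 X_2 X_3` and `Y_3 Y_2 Y_1`
differ by at most `Σ_i D((X_i^a Ψ)_a, (Y_i^a Ψ)_a)` in statistical difference. -/
theorem threefold_exchange_bound {H : Type*} [NormedAddCommGroup H] [InnerProductSpace ℂ H]
    [CompleteSpace H] {A : Type*} [Fintype A] [Nonempty A]
    (Ψ : H) (hΨ : ‖Ψ‖ = 1)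
    (X Y : Fin 3 → A → (H →L[ℂ] H))
    (hXpos : ∀ i a, (X i a).IsPositive) (hYpos : ∀ i a, (Y i a).IsPositive)
    (hXsum : ∀ i, ∑ a, X i a ^ 2 = 1) (hYsum : ∀ i, ∑ a, Y i a ^ 2 = 1)
    (hcomm : ∀ i j a a', X i a * Y j a' = Y j a' * X i a) :
    (1 / 2) * ∑ a₁ : A, ∑ a₂ : A, ∑ a₃ : A,
        |‖(X 0 a₁) ((X 1 a₂) ((X 2 a₃) Ψ))‖ ^ 2 - ‖(Y 2 a₃) ((Y 1 a₂) ((Y 0 a₁) Ψ))‖ ^ 2|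
      ≤ ∑ i : Fin 3, tdistFam (fun a => (X i a) Ψ) (fun a => (Y i a) Ψ) := by
  have hsX : ∀ i a, IsSelfAdjoint (X i a) := fun i a => (hXpos i a).isSelfAdjoint
  have hsY : ∀ i a, IsSelfAdjoint (Y i a) := fun i a => (hYpos i a).isSelfAdjoint
  have hc : ∀ i j a a' (z : H), (X i a) ((Y j a') z) = (Y j a') ((X i a) z) := fun i j a a' z => by
    rw [← ContinuousLinearMap.mul_apply, hcomm, ContinuousLinearMap.mul_apply]
  have hΨ2 : ‖Ψ‖^2 = 1 := by rw [hΨ]; norm_num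
  set u3 : A × A × A → H := fun a => X 0 a.1 (X 1 a.2.1 (X 2 a.2.2 Ψ)) with hu3
  set u2 : A × A × A → H := fun a => Y 2 a.2.2 (X 0 a.1 (X 1 a.2.1 Ψ)) with hu2
  set u1 : A × A × A → H := fun a => Y 2 a.2.2 (Y 1 a.2.1 (X 0 a.1 Ψ)) with hu1
  set u0 : A × A × A → H := fun a => Y 2 a.2.2 (Y 1 a.2.1 (Y 0 a.1 Ψ)) with hu0
  -- unit-norm conditions
  have S0 : ∑ s : A × A × A, ‖u0 s‖^2 = 1 := by
    rw [hu0, sum_prod3]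
    simp only [sum_norm_red (Y 2) (hsY 2) (hYsum 2), sum_norm_red (Y 1) (hsY 1) (hYsum 1),
      sum_norm_red (Y 0) (hsY 0) (hYsum 0), hΨ2, Finset.sum_const, nsmul_eq_mul]
  have S1 : ∑ s : A × A × A, ‖u1 s‖^2 = 1 := by
    rw [hu1, sum_prod3]
    simp only [sum_norm_red (Y 2) (hsY 2) (hYsum 2), sum_norm_red (Y 1) (hsY 1) (hYsum 1)]
    rw [sum_norm_red (X 0) (hsX 0) (hXsum 0)]
    exact hΨ2
  have S2 : ∑ s : A × A × A, ‖u2 s‖^2 = 1 := by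
    rw [hu2, sum_prod3]
    simp only [sum_norm_red (Y 2) (hsY 2) (hYsum 2)]
    rw [Finset.sum_comm]
    simp only [sum_norm_red (X 0) (hsX 0) (hXsum 0)]
    rw [sum_norm_red (X 1) (hsX 1) (hXsum 1)]
    exact hΨ2
  have S3 : ∑ s : A × A × A, ‖u3 s‖^2 = 1 := by
    rw [hu3, sum_prod3, sum_rot]
    simp only [sum_norm_red (X 0) (hsX 0) (hXsum 0)]
    rw [Finset.sum_comm]
    simp only [sum_norm_red (X 1) (hsX 1) (hXsum 1)]
    rw [sum_norm_red (X 2) (hsX 2) (hXsum 2)]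
    exact hΨ2
  -- inner product identities
  have I10 : ∑ s : A × A × A, ⟪u1 s, u0 s⟫ = ∑ a : A, ⟪X 0 a Ψ, Y 0 a Ψ⟫ := by
    rw [hu1, hu0, sum_prod3]
    simp only [sum_inner_red (Y 2) (hsY 2) (hYsum 2), sum_inner_red (Y 1) (hsY 1) (hYsum 1),
      Finset.sum_const, nsmul_eq_mul]
  have I21 : ∑ s : A × A × A, ⟪u2 s, u1 s⟫ = ∑ a : A, ⟪X 1 a Ψ, Y 1 a Ψ⟫ := by
    rw [hu2, hu1, sum_prod3]
    simp only [sum_inner_red (Y 2) (hsY 2) (hYsum 2)]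
    simp only [← hc 0 1]
    rw [Finset.sum_comm]
    simp only [sum_inner_red (X 0) (hsX 0) (hXsum 0)]
  have I32 : ∑ s : A × A × A, ⟪u3 s, u2 s⟫ = ∑ a : A, ⟪X 2 a Ψ, Y 2 a Ψ⟫ := by
    rw [hu3, hu2, sum_prod3]
    simp only [← hc 0 2, ← hc 1 2]
    rw [sum_rot]
    simp only [sum_inner_red (X 0) (hsX 0) (hXsum 0)]
    rw [Finset.sum_comm]
    simp only [sum_inner_red (X 1) (hsX 1) (hXsum 1)]
  -- assemble
  have hL : (∑ s : A × A × A, |‖u3 s‖^2 - ‖u0 s‖^2|) = ∑ a₁ : A, ∑ a₂ : A, ∑ a₃ : A,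
      |‖(X 0 a₁) ((X 1 a₂) ((X 2 a₃) Ψ))‖ ^ 2 - ‖(Y 2 a₃) ((Y 1 a₂) ((Y 0 a₁) Ψ))‖ ^ 2| :=
    sum_prod3 _
  have e10 : tdistFam u1 u0 = tdistFam (fun a => (X 0 a) Ψ) (fun a => (Y 0 a) Ψ) := by
    simp only [tdistFam]; rw [I10]
  have e21 : tdistFam u2 u1 = tdistFam (fun a => (X 1 a) Ψ) (fun a => (Y 1 a) Ψ) := by
    simp only [tdistFam]; rw [I21]
  have e32 : tdistFam u3 u2 = tdistFam (fun a => (X 2 a) Ψ) (fun a => (Y 2 a) Ψ) := by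
    simp only [tdistFam]; rw [I32]
  calc (1 / 2) * ∑ a₁ : A, ∑ a₂ : A, ∑ a₃ : A,
        |‖(X 0 a₁) ((X 1 a₂) ((X 2 a₃) Ψ))‖ ^ 2 - ‖(Y 2 a₃) ((Y 1 a₂) ((Y 0 a₁) Ψ))‖ ^ 2|
      = (1/2) * ∑ s : A × A × A, |‖u3 s‖^2 - ‖u0 s‖^2| := by rw [hL]
    _ ≤ tdistFam u3 u0 := lemTV u3 u0 S3 S0
    _ ≤ tdistFam u3 u2 + (tdistFam u2 u1 + tdistFam u1 u0) := by
        have t1 := lemBFam u3 u2 u0 S3 S2 S0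
        have t2 := lemBFam u2 u1 u0 S2 S1 S0
        linarith
    _ = ∑ i : Fin 3, tdistFam (fun a => (X i a) Ψ) (fun a => (Y i a) Ψ) := by
        rw [Fin.sum_univ_three, e32, e21, e10]
        ring
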